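/- Let ε, β, Γ > 0, c > 0, and let K ≥ 1 be a natural number. Let α_1, …, α_K > 0 and d_1, …, d_K ≥ 0 be real numbers such that: (i) Σ_{k=1}^{K−1} α_k⁻¹ < Γ/ε; (ii) Σ_{k=1}^{K} d_k ≤ Γ; and (iii) for every k ∈ {1,…,K}, either α_k = β or d_k ≥ α_k^c. Then K ≤ (β/ε + ε^{−c/(c+1)})·Γ + 2. -/

import Mathlib

/-- Iteration bound for the proximal point method with a (β, c)-kinetic
dynamic approximate proximal oracle, abstracted as a statement about finite real sequences. -/
theorem stmt14 (ε β Γ c : ℝ) (hε : 0 < ε) (hβ : 0 < β) (hΓ : 0 < Γ) (hc : 0 < c)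
    (K : ℕ) (hK : 1 ≤ K) (α d : ℕ → ℝ)
    (hα : ∀ k ∈ Finset.Icc 1 K, 0 < α k)
    (hd : ∀ k ∈ Finset.Icc 1 K, 0 ≤ d k)
    (h1 : ∑ k ∈ Finset.Icc 1 (K - 1), (α k)⁻¹ < Γ / ε)
    (h2 : ∑ k ∈ Finset.Icc 1 K, d k ≤ Γ)
    (h3 : ∀ k ∈ Finset.Icc 1 K, α k = β ∨ (α k) ^ c ≤ d k) :
    (K : ℝ) ≤ (β / ε + ε ^ (-(c / (c + 1)))) * Γ + 2 := by
  have hc1 : (0:ℝ) < c + 1 := by linarith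
  set t : ℝ := ε ^ ((1:ℝ)/(c+1)) with ht
  set s : ℝ := ε ^ (-(c/(c+1))) with hs
  have htpos : 0 < t := Real.rpow_pos_of_pos hε _
  have hspos : 0 < s := Real.rpow_pos_of_pos hε _
  -- key pointwise bound
  have key : ∀ k ∈ Finset.Icc 1 (K-1),
      (1:ℝ) ≤ (β + (c/(c+1)) * t) * (α k)⁻¹ + (1/(c+1)) * s * d k := by
    intro k hk
    have hk' : k ∈ Finset.Icc 1 K := by
      simp only [Finset.mem_Icc] at hk ⊢
      exact ⟨hk.1, le_trans hk.2 (Nat.sub_le K 1)⟩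
    have hαk := hα k hk'
    have hdk := hd k hk'
    have hαcpos : 0 < (α k) ^ c := Real.rpow_pos_of_pos hαk _
    rcases h3 k hk' with hcase | hcase
    · have e1 : β * (α k)⁻¹ = 1 := by rw [hcase]; field_simp
      have e2 : 0 ≤ (c/(c+1)) * t * (α k)⁻¹ := by positivity
      have e3 : 0 ≤ (1/(c+1)) * s * d k := by
        apply mul_nonneg _ hdk; positivity
      nlinarith
    · have amgm := Real.geom_mean_le_arith_mean2_weighted
        (w₁ := c/(c+1)) (w₂ := 1/(c+1))
        (p₁ := t * (α k)⁻¹) (p₂ := s * (α k) ^ c)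
        (by positivity) (by positivity)
        (by positivity) (by positivity)
        (by field_simp)
      have e1 : (t * (α k)⁻¹) ^ (c/(c+1)) * (s * (α k) ^ c) ^ (1/(c+1)) = 1 := by
        rw [Real.mul_rpow htpos.le (inv_nonneg.mpr hαk.le),
            Real.mul_rpow hspos.le hαcpos.le,
            Real.inv_rpow hαk.le, ← Real.rpow_neg hαk.le,
            ht, hs, ← Real.rpow_mul hε.le, ← Real.rpow_mul hε.le,
            ← Real.rpow_mul hαk.le,
            mul_mul_mul_comm, ← Real.rpow_add hε, ← Real.rpow_add hαk,
            show (1/(c+1))*(c/(c+1)) + -(c/(c+1))*(1/(c+1)) = (0:ℝ) by ring,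
            show -(c/(c+1)) + c*(1/(c+1)) = (0:ℝ) by ring,
            Real.rpow_zero, Real.rpow_zero, mul_one]
      rw [e1] at amgm
      have e4 : (1/(c+1)) * (s * (α k) ^ c) ≤ (1/(c+1)) * s * d k := by
        rw [← mul_assoc]
        exact mul_le_mul_of_nonneg_left hcase (by positivity)
      have e5 : 0 ≤ β * (α k)⁻¹ := by positivity
      nlinarith
  -- sum the pointwise bound
  have hsub : Finset.Icc 1 (K-1) ⊆ Finset.Icc 1 K := by
    apply Finset.Icc_subset_Icc le_rfl (Nat.sub_le K 1)
  have hdsum : ∑ k ∈ Finset.Icc 1 (K-1), d k ≤ ∑ k ∈ Finset.Icc 1 K, d k :=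
    Finset.sum_le_sum_of_subset_of_nonneg hsub (fun k hk _ => hd k hk)
  have hcard : ((Finset.Icc 1 (K-1)).card : ℝ) = (K:ℝ) - 1 := by
    rw [Nat.card_Icc]
    have : K - 1 + 1 - 1 = K - 1 := by omega
    rw [this, Nat.cast_sub hK]
    norm_num
  have hsum : (K:ℝ) - 1 ≤ (β + (c/(c+1)) * t) * (Γ/ε) + (1/(c+1)) * s * Γ := by
    have step1 : (K:ℝ) - 1 ≤ ∑ k ∈ Finset.Icc 1 (K-1),
        ((β + (c/(c+1)) * t) * (α k)⁻¹ + (1/(c+1)) * s * d k) := by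
      calc (K:ℝ) - 1 = ∑ _k ∈ Finset.Icc 1 (K-1), (1:ℝ) := by
            rw [Finset.sum_const, nsmul_eq_mul, mul_one, hcard]
        _ ≤ _ := Finset.sum_le_sum key
    have step2 : ∑ k ∈ Finset.Icc 1 (K-1),
        ((β + (c/(c+1)) * t) * (α k)⁻¹ + (1/(c+1)) * s * d k)
        = (β + (c/(c+1)) * t) * (∑ k ∈ Finset.Icc 1 (K-1), (α k)⁻¹)
          + (1/(c+1)) * s * (∑ k ∈ Finset.Icc 1 (K-1), d k) := by
      rw [Finset.sum_add_distrib, ← Finset.mul_sum, ← Finset.mul_sum]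
    have hC1 : 0 < β + (c/(c+1)) * t := by positivity
    have hC2 : (0:ℝ) ≤ (1/(c+1)) * s := by positivity
    have b1 : (β + (c/(c+1)) * t) * (∑ k ∈ Finset.Icc 1 (K-1), (α k)⁻¹)
        ≤ (β + (c/(c+1)) * t) * (Γ/ε) :=
      mul_le_mul_of_nonneg_left h1.le hC1.le
    have b2 : (1/(c+1)) * s * (∑ k ∈ Finset.Icc 1 (K-1), d k) ≤ (1/(c+1)) * s * Γ :=
      mul_le_mul_of_nonneg_left (le_trans hdsum h2) hC2
    linarith [step1, step2 ▸ step1]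
  -- t = s * ε
  have hts : t = s * ε := by
    rw [ht, hs, show (1:ℝ)/(c+1) = -(c/(c+1)) + 1 by field_simp; ring,
        Real.rpow_add hε, Real.rpow_one]
  have hfin : (β + (c/(c+1)) * t) * (Γ/ε) + (1/(c+1)) * s * Γ = (β/ε + s) * Γ := by
    rw [hts]
    field_simp
    ring
  rw [hfin] at hsum
  linarith
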